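/- Let a be a symmetric, unit-variance random variable with E|a|³ < ∞, let the random vector a ∈ ℝ^n have i.i.d. coordinates distributed as a, let x ∈ S^{n−1}, and set v_x := E[ sign(⟨a, x⟩)·a ]. There is an absolute constant c such that if ‖x‖_∞ ≤ c/E|a|³, then 1/2 ≤ ‖v_x‖_2 ≤ 1. -/

import Mathlib

open MeasureTheory ProbabilityTheory Real
open scoped ENNReal NNReal Pointwise BigOperators

noncomputable section

/-- Dot product on `Fin n → ℝ`. -/
def dot {n : ℕ} (u v : Fin n → ℝ) : ℝ := ∑ j, u j * v j

/-- Squared Euclidean norm. -/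
def sq2 {n : ℕ} (u : Fin n → ℝ) : ℝ := ∑ j, (u j) ^ 2

/-- Sup norm (max absolute coordinate). -/
def linf {n : ℕ} (u : Fin n → ℝ) : ℝ := ⨆ j, |u j|

/-- Unit Euclidean ball. -/
def ball2 (n : ℕ) : Set (Fin n → ℝ) := {u | sq2 u ≤ 1}

/-- Sign function, with `psign 0 = 1`. -/
def psign (t : ℝ) : ℝ := if 0 ≤ t then 1 else -1

/-- Standard Gaussian measure on `Fin n → ℝ`. -/
def stdGaussianPi (n : ℕ) : Measure (Fin n → ℝ) := Measure.pi fun _ => gaussianReal 0 1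

/-- Gaussian mean width `w(K) = E sup_{z ∈ K - K} ⟨g, z⟩`. -/
def meanWidth {n : ℕ} (K : Set (Fin n → ℝ)) : ℝ :=
  ∫ g, sSup ((fun z => dot g z) '' (K - K)) ∂(stdGaussianPi n)

/-- Law of a random sign: `1` with probability `1 - p`, `-1` with probability `p`. -/
def flipLaw (p : ℝ) : Measure ℝ :=
  ENNReal.ofReal (1 - p) • Measure.dirac (1 : ℝ) + ENNReal.ofReal p • Measure.dirac (-1 : ℝ)


set_option maxHeartbeats 1000000

section AuxLemmas

lemma psign_mul_self (t : ℝ) : psign t * t = |t| := by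
  unfold psign; split_ifs with h
  · rw [one_mul, abs_of_nonneg h]
  · rw [neg_one_mul, abs_of_neg (not_le.mp h)]

lemma abs_psign (t : ℝ) : |psign t| = 1 := by
  unfold psign; split_ifs <;> norm_num

lemma measurable_psign : Measurable psign := by
  unfold psign
  exact Measurable.ite (measurableSet_le measurable_const measurable_id)
    measurable_const measurable_const


lemma measurable_psign' : Measurable (fun t : ℝ => if 0 ≤ t then (1:ℝ) else -1) :=
  Measurable.ite (measurableSet_le measurable_const measurable_id)
    measurable_const measurable_const

lemma nonneg_of_deriv_nonneg {f : ℝ → ℝ} (hf : Differentiable ℝ f) (h0 : f 0 = 0)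
    (hd : ∀ y, 0 < y → 0 ≤ deriv f y) : ∀ z, 0 ≤ z → 0 ≤ f z := by
  intro z hz
  have hm : MonotoneOn f (Set.Ici (0:ℝ)) := by
    apply monotoneOn_of_deriv_nonneg (convex_Ici 0) hf.continuous.continuousOn
      hf.differentiableOn
    intro y hy
    rw [interior_Ici] at hy
    exact hd y hy
  have := hm Set.self_mem_Ici hz hz
  rwa [h0] at this

lemma sin_lower {z : ℝ} (hz : 0 ≤ z) : z - z^2/2 ≤ Real.sin z := by
  have key := nonneg_of_deriv_nonneg (f := fun z => Real.sin z - z + z^2/2)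
    (by fun_prop) (by norm_num)
    (by
      intro y hy
      have h1 : HasDerivAt (fun z:ℝ => Real.sin z - z + z^2/2) (Real.cos y - 1 + y) y := by
        have := ((Real.hasDerivAt_sin y).sub (hasDerivAt_id y)).add
          ((hasDerivAt_pow 2 y).div_const 2)
        refine this.congr_deriv ?_
        push_cast; ring
      rw [h1.deriv]
      nlinarith [Real.one_sub_sq_div_two_le_cos (x := y), Real.neg_one_le_cos y]) z hz
  linarith

lemma cos_cubic_nonneg {z : ℝ} (hz : 0 ≤ z) : Real.cos z ≤ 1 - z^2/2 + z^3/6 := by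
  have key := nonneg_of_deriv_nonneg (f := fun z => 1 - z^2/2 + z^3/6 - Real.cos z)
    (by fun_prop) (by norm_num)
    (by
      intro y hy
      have h1 : HasDerivAt (fun z:ℝ => 1 - z^2/2 + z^3/6 - Real.cos z)
          (-(y) + y^2/2 + Real.sin y) y := by
        have := (((hasDerivAt_const y (1:ℝ)).sub ((hasDerivAt_pow 2 y).div_const 2)).add
          ((hasDerivAt_pow 3 y).div_const 6)).sub (Real.hasDerivAt_cos y)
        refine this.congr_deriv ?_
        push_cast; ring
      rw [h1.deriv]
      have := sin_lower hy.le
      linarith) z hz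
  linarith

lemma cos_cubic (z : ℝ) : Real.cos z ≤ 1 - z^2/2 + |z|^3/6 := by
  rcases le_or_gt 0 z with h | h
  · rw [abs_of_nonneg h]; exact cos_cubic_nonneg h
  · have := cos_cubic_nonneg (z := -z) (by linarith)
    rw [Real.cos_neg] at this
    rw [abs_of_neg h]
    calc Real.cos z ≤ 1 - (-z)^2/2 + (-z)^3/6 := this
    _ = 1 - z^2/2 + (-z)^3/6 := by ring
    _ = _ := by ring

lemma exp_neg_upper {y : ℝ} (hy : 0 ≤ y) : Real.exp (-y) ≤ 1 - y + y^2/2 := by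
  have key := nonneg_of_deriv_nonneg (f := fun y => 1 - y + y^2/2 - Real.exp (-y))
    (by fun_prop) (by norm_num)
    (by
      intro y hy
      have h1 : HasDerivAt (fun y:ℝ => 1 - y + y^2/2 - Real.exp (-y))
          (-1 + y + Real.exp (-y)) y := by
        have hexp : HasDerivAt (fun y:ℝ => Real.exp (-y)) (-Real.exp (-y)) y := by
          have := (Real.hasDerivAt_exp (-y)).comp y ((hasDerivAt_id y).neg)
          refine this.congr_deriv ?_; ring
        have := (((hasDerivAt_const y (1:ℝ)).sub (hasDerivAt_id y)).add
          ((hasDerivAt_pow 2 y).div_const 2)).sub hexp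
        refine this.congr_deriv ?_
        push_cast; ring
      rw [h1.deriv]
      have := Real.add_one_le_exp (-y)
      linarith) y hy
  linarith




lemma oneSubCos_div_sq_nonneg (u : ℝ) : 0 ≤ (1 - Real.cos u)/u^2 := by
  apply div_nonneg (by nlinarith [Real.cos_le_one u]) (sq_nonneg u)

lemma oneSubCos_div_sq_le_half (u : ℝ) : (1 - Real.cos u)/u^2 ≤ 1/2 := by
  rcases eq_or_ne u 0 with h | h
  · simp [h]
  · rw [div_le_iff₀ (by positivity)]
    nlinarith [Real.one_sub_sq_div_two_le_cos (x := u)]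

lemma measurable_oneSubCos_div_sq : Measurable (fun u : ℝ => (1 - Real.cos u)/u^2) :=
  (measurable_const.sub Real.measurable_cos).div ((measurable_id.pow_const 2))

lemma intervalIntegrable_oneSubCos (a b : ℝ) :
    IntervalIntegrable (fun u : ℝ => (1 - Real.cos u)/u^2) volume a b := by
  rw [intervalIntegrable_iff]
  apply Measure.integrableOn_of_bounded (M := 1/2) measure_Ioc_lt_top.ne
    measurable_oneSubCos_div_sq.aestronglyMeasurable
  filter_upwards with u
  rw [Real.norm_eq_abs, abs_of_nonneg (oneSubCos_div_sq_nonneg u)]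
  exact oneSubCos_div_sq_le_half u

lemma integral_inv_sq' {a b : ℝ} (ha : 0 < a) (hab : a ≤ b) :
    ∫ x in a..b, (x^2)⁻¹ = a⁻¹ - b⁻¹ := by
  have h0 : (0:ℝ) ∉ Set.uIcc a b := by
    rw [Set.uIcc_of_le hab]
    rintro ⟨h1, -⟩
    linarith
  have h := integral_zpow (a := a) (b := b) (n := (-2:ℤ)) (Or.inr ⟨by norm_num, h0⟩)
  have hb : 0 < b := lt_of_lt_of_le ha hab
  have e1 : ∀ x : ℝ, x ^ (-2:ℤ) = (x^2)⁻¹ := by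
    intro x; rw [zpow_neg]; norm_cast
  simp_rw [e1] at h
  rw [h]
  rw [show (-2:ℤ) + 1 = -1 by norm_num]
  rw [zpow_neg, zpow_neg, zpow_one, zpow_one]
  ring

lemma K_le {A : ℝ} (hA : 0 ≤ A) : ∫ u in (0:ℝ)..A, (1 - Real.cos u)/u^2 ≤ 2 := by
  rcases le_or_gt A 2 with h | h
  · calc ∫ u in (0:ℝ)..A, (1 - Real.cos u)/u^2
        ≤ ∫ _ in (0:ℝ)..A, (1/2 : ℝ) := by
          apply intervalIntegral.integral_mono_on hA (intervalIntegrable_oneSubCos 0 A)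
            intervalIntegrable_const
          intro u _
          exact oneSubCos_div_sq_le_half u
      _ = A * (1/2) := by simp
      _ ≤ 2 := by linarith
  · have hsplit := intervalIntegral.integral_add_adjacent_intervals (a := (0:ℝ)) (b := 2) (c := A)
      (intervalIntegrable_oneSubCos 0 2) (intervalIntegrable_oneSubCos 2 A)
    have h1 : ∫ u in (0:ℝ)..2, (1 - Real.cos u)/u^2 ≤ 1 := by
      calc ∫ u in (0:ℝ)..2, (1 - Real.cos u)/u^2
          ≤ ∫ _ in (0:ℝ)..2, (1/2 : ℝ) := by
            apply intervalIntegral.integral_mono_on (by norm_num) (intervalIntegrable_oneSubCos 0 2)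
              intervalIntegrable_const
            intro u _
            exact oneSubCos_div_sq_le_half u
        _ = 1 := by simp
    have h2 : ∫ u in (2:ℝ)..A, (1 - Real.cos u)/u^2 ≤ 1 := by
      have hint2 : IntervalIntegrable (fun u : ℝ => 2 * (u^2)⁻¹) volume 2 A := by
        apply ContinuousOn.intervalIntegrable
        apply ContinuousOn.mul continuousOn_const
        apply ContinuousOn.inv₀ (by fun_prop)
        intro x hx
        rw [Set.uIcc_of_le h.le] at hx
        have : (2:ℝ) ≤ x := hx.1
        positivity
      calc ∫ u in (2:ℝ)..A, (1 - Real.cos u)/u^2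
          ≤ ∫ u in (2:ℝ)..A, 2 * (u^2)⁻¹ := by
            apply intervalIntegral.integral_mono_on h.le (intervalIntegrable_oneSubCos 2 A) hint2
            intro u hu
            have hu2 : (2:ℝ) ≤ u := hu.1
            rw [div_le_iff₀ (by positivity)]
            have := Real.neg_one_le_cos u
            field_simp
            nlinarith
        _ = 2 * ((2:ℝ)⁻¹ - A⁻¹) := by
            rw [intervalIntegral.integral_const_mul, integral_inv_sq' (by norm_num) h.le]
        _ ≤ 1 := by
            have : 0 ≤ A⁻¹ := by positivity
            linarith
    linarith

lemma pointwise_abs_lower (s : ℝ) {T : ℝ} (hT : 0 < T) :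
    (1/2) * ∫ t in (0:ℝ)..T, (1 - Real.cos (t*s))/t^2 ≤ |s| := by
  rcases eq_or_ne s 0 with rfl | hs
  · simp
  · set r := |s| with hr
    have hr0 : 0 < r := abs_pos.mpr hs
    have hcos : ∀ t : ℝ, (1 - Real.cos (t*s))/t^2 = r^2 * ((1 - Real.cos (t*r))/(t*r)^2) := by
      intro t
      rcases eq_or_ne t 0 with rfl | ht
      · simp
      · have : Real.cos (t*s) = Real.cos (t*r) := by
          rcases abs_choice s with h | h
          · rw [hr, h]
          · rw [hr, h, mul_neg, Real.cos_neg]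
        rw [this, mul_pow]
        field_simp
    calc (1/2) * ∫ t in (0:ℝ)..T, (1 - Real.cos (t*s))/t^2
        = (1/2) * (r^2 * ∫ t in (0:ℝ)..T, (1 - Real.cos (t*r))/(t*r)^2) := by
          congr 1
          rw [← intervalIntegral.integral_const_mul]
          apply intervalIntegral.integral_congr
          intro t _
          exact hcos t
      _ = (1/2) * (r^2 * (r⁻¹ * ∫ u in (0:ℝ)..(T*r), (1 - Real.cos u)/u^2)) := by
          rw [intervalIntegral.integral_comp_mul_right (fun u => (1 - Real.cos u)/u^2) hr0.ne']
          norm_num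
      _ = (1/2) * r * ∫ u in (0:ℝ)..(T*r), (1 - Real.cos u)/u^2 := by
          field_simp
      _ ≤ (1/2) * r * 2 := by
          apply mul_le_mul_of_nonneg_left (K_le (by positivity)) (by positivity)
      _ = r := by ring




lemma integrable_of_bdd {α : Type*} [MeasurableSpace α] {μ : Measure α} [IsFiniteMeasure μ]
    {f : α → ℝ} (hf : AEStronglyMeasurable f μ) (C : ℝ) (h : ∀ a, |f a| ≤ C) :
    Integrable f μ :=
  Integrable.mono' (integrable_const C) hf (ae_of_all _ (by simpa using h))

variable {ν : Measure ℝ} [IsProbabilityMeasure ν]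

lemma integral_odd_eq_zero (hsym : ν.map (fun t => -t) = ν) {f : ℝ → ℝ}
    (hf : AEStronglyMeasurable f ν) (hodd : ∀ t, f (-t) = - f t) : ∫ y, f y ∂ν = 0 := by
  have h1 : ∫ y, f y ∂ν = ∫ y, f (-y) ∂ν := by
    conv_lhs => rw [← hsym]
    exact integral_map measurable_neg.aemeasurable (by rwa [hsym])
  simp_rw [hodd] at h1
  rw [integral_neg] at h1
  linarith

lemma sq_integrable_of_eq_one (h2 : (∫ t, t ^ 2 ∂ν) = 1) : Integrable (fun t => t^2) ν := by
  by_contra h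
  rw [integral_undef h] at h2
  norm_num at h2

lemma abs_integrable_of_sq (h2i : Integrable (fun t : ℝ => t^2) ν) :
    Integrable (fun t : ℝ => |t|) ν := by
  apply Integrable.mono' ((h2i.add (integrable_const 1)).div_const 2)
    (measurable_abs.aestronglyMeasurable)
  filter_upwards with t
  rw [Real.norm_eq_abs, abs_abs]
  simp only [Pi.add_apply]
  nlinarith [sq_nonneg (|t| - 1), sq_abs t]

lemma id_integrable_of_sq (h2i : Integrable (fun t : ℝ => t^2) ν) :
    Integrable (fun t : ℝ => t) ν := by
  apply Integrable.mono' (abs_integrable_of_sq h2i) measurable_id.aestronglyMeasurable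
  filter_upwards with t
  rw [Real.norm_eq_abs]
  simp

lemma integral_id_zero (hsym : ν.map (fun t => -t) = ν) : ∫ y, y ∂ν = 0 :=
  integral_odd_eq_zero hsym measurable_id.aestronglyMeasurable (fun t => rfl)

lemma integral_sin_zero (hsym : ν.map (fun t => -t) = ν) (u : ℝ) :
    ∫ y, Real.sin (u * y) ∂ν = 0 := by
  have hm : AEStronglyMeasurable (fun y => Real.sin (u * y)) ν :=
    (Real.continuous_sin.comp (continuous_const.mul continuous_id)).aestronglyMeasurable
  apply integral_odd_eq_zero hsym hm
  intro t
  simp only [mul_neg, Real.sin_neg]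

lemma cos_integrable (u : ℝ) : Integrable (fun y => Real.cos (u * y)) ν :=
  integrable_of_bdd
    ((Real.continuous_cos.comp (continuous_const.mul continuous_id)).aestronglyMeasurable)
    1 (fun y => Real.abs_cos_le_one _)

/-- the one-factor characteristic function bounds -/
lemma factor_bounds (h2 : (∫ t, t ^ 2 ∂ν) = 1) (hI3 : Integrable (fun t => |t| ^ 3) ν)
    (u : ℝ) :
    1 - u^2/2 ≤ ∫ y, Real.cos (u * y) ∂ν ∧
      ∫ y, Real.cos (u * y) ∂ν ≤ 1 - u^2/2 + |u|^3 * (∫ t, |t| ^ 3 ∂ν) / 6 := by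
  have h2i : Integrable (fun t : ℝ => t^2) ν := sq_integrable_of_eq_one h2
  constructor
  · have hlow : Integrable (fun y : ℝ => 1 - (u*y)^2/2) ν := by
      apply Integrable.sub (integrable_const 1)
      have : (fun y : ℝ => (u*y)^2/2) = fun y => (u^2/2) * y^2 := by
        funext y; ring
      rw [this]
      exact (h2i.const_mul _)
    calc 1 - u^2/2 = ∫ y, (1 - (u*y)^2/2) ∂ν := by
          rw [integral_sub (integrable_const 1)]
          · simp only [integral_const, measure_univ, probReal_univ, ENNReal.toReal_one, smul_eq_mul, one_mul]
            have : (fun y : ℝ => (u*y)^2/2) = fun y => (u^2/2) * y^2 := by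
              funext y; ring
            rw [this, integral_const_mul, h2]
            ring
          · have : (fun y : ℝ => (u*y)^2/2) = fun y => (u^2/2) * y^2 := by
              funext y; ring
            rw [this]
            exact h2i.const_mul _
      _ ≤ ∫ y, Real.cos (u * y) ∂ν := by
          apply integral_mono hlow (cos_integrable u)
          intro y
          exact Real.one_sub_sq_div_two_le_cos
  · have hup : Integrable (fun y : ℝ => 1 - (u*y)^2/2 + |u*y|^3/6) ν := by
      have e1 : (fun y : ℝ => 1 - (u*y)^2/2 + |u*y|^3/6)
          = fun y => (1 - (u^2/2) * y^2) + (|u|^3/6) * |y|^3 := by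
        funext y
        rw [abs_mul, mul_pow]
        ring
      rw [e1]
      exact ((integrable_const 1).sub (h2i.const_mul _)).add (hI3.const_mul _)
    calc ∫ y, Real.cos (u * y) ∂ν ≤ ∫ y, (1 - (u*y)^2/2 + |u*y|^3/6) ∂ν := by
          apply integral_mono (cos_integrable u) hup
          intro y
          exact cos_cubic (u*y)
      _ = 1 - u^2/2 + |u|^3 * (∫ t, |t| ^ 3 ∂ν) / 6 := by
          have e1 : (fun y : ℝ => 1 - (u*y)^2/2 + |u*y|^3/6)
              = fun y => (1 - (u^2/2) * y^2) + (|u|^3/6) * |y|^3 := by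
            funext y
            rw [abs_mul, mul_pow]
            ring
          rw [e1]
          have ha : Integrable (fun y : ℝ => 1 - u^2/2 * y^2) ν := by
            have : (fun y : ℝ => 1 - u^2/2 * y^2)
                = (fun _ : ℝ => (1:ℝ)) - (fun y : ℝ => u^2/2 * y^2) := rfl
            rw [this]
            exact (integrable_const 1).sub (h2i.const_mul _)
          have hb : Integrable (fun y : ℝ => |u|^3/6 * |y|^3) ν := hI3.const_mul _
          rw [integral_add ha hb]
          rw [integral_sub (integrable_const 1) (h2i.const_mul _)]
          rw [integral_const_mul, integral_const_mul, h2]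
          simp only [integral_const, measure_univ, probReal_univ, ENNReal.toReal_one, smul_eq_mul, one_mul]
          ring




variable {n : ℕ} (ν : Measure ℝ) [IsProbabilityMeasure ν]

lemma pi_integral_prod (f : Fin n → ℝ → ℂ) :
    ∫ v : Fin n → ℝ, ∏ i, f i (v i) ∂(Measure.pi fun _ => ν) = ∏ i, ∫ y, f i y ∂ν := by
  letI : MeasureSpace ℝ := ⟨ν⟩
  exact integral_fintype_prod_eq_prod (μ := fun _ => ν) f

lemma pi_integrable_prod {f : Fin n → ℝ → ℝ} (hf : ∀ i, Integrable (f i) ν) :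
    Integrable (fun v : Fin n → ℝ => ∏ i, f i (v i)) (Measure.pi fun _ => ν) := by
  letI : MeasureSpace ℝ := ⟨ν⟩
  exact Integrable.fintype_prod (𝕜 := ℝ) hf

lemma pi_integral_prod_real (f : Fin n → ℝ → ℝ) :
    ∫ v : Fin n → ℝ, ∏ i, f i (v i) ∂(Measure.pi fun _ => ν) = ∏ i, ∫ y, f i y ∂ν := by
  letI : MeasureSpace ℝ := ⟨ν⟩
  exact integral_fintype_prod_eq_prod (μ := fun _ => ν) f

/-- single-coordinate integrability -/
lemma pi_integrable_single {f : ℝ → ℝ} (hf : Integrable f ν) (j : Fin n) :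
    Integrable (fun v : Fin n → ℝ => f (v j)) (Measure.pi fun _ => ν) := by
  classical
  have : (fun v : Fin n → ℝ => f (v j))
      = fun v => ∏ i, (fun i y => if i = j then f y else 1) i (v i) := by
    funext v
    rw [Fintype.prod_eq_single j (fun k hk => by simp [hk])]
    simp
  rw [this]
  refine pi_integrable_prod ν (f := fun i y => if i = j then f y else 1) ?_
  intro i
  by_cases h : i = j <;> simp [h, hf, integrable_const]

lemma pi_integral_single {f : ℝ → ℝ} (j : Fin n) :
    ∫ v : Fin n → ℝ, f (v j) ∂(Measure.pi fun _ => ν) = ∫ y, f y ∂ν := by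
  classical
  have : (fun v : Fin n → ℝ => f (v j))
      = fun v => ∏ i, (fun i y => if i = j then f y else 1) i (v i) := by
    funext v
    rw [Fintype.prod_eq_single j (fun k hk => by simp [hk])]
    simp
  rw [this, pi_integral_prod_real ν (fun i y => if i = j then f y else 1)]
  rw [Fintype.prod_eq_single j (fun k hk => by simp [hk, integral_const])]
  simp

lemma pi_integrable_pair {f g : ℝ → ℝ} (hf : Integrable f ν) (hg : Integrable g ν)
    {i j : Fin n} (hij : i ≠ j) :
    Integrable (fun v : Fin n → ℝ => f (v i) * g (v j)) (Measure.pi fun _ => ν) := by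
  classical
  have : (fun v : Fin n → ℝ => f (v i) * g (v j))
      = fun v => ∏ k, (fun k y => if k = i then f y else if k = j then g y else 1) k (v k) := by
    funext v
    rw [Fintype.prod_eq_mul i j hij (fun k hk => by simp [hk.1, hk.2])]
    simp [hij, (show j ≠ i from hij.symm)]
  rw [this]
  refine pi_integrable_prod ν
    (f := fun k y => if k = i then f y else if k = j then g y else 1) ?_
  intro k
  by_cases h1 : k = i
  · simp [h1, hf]
  · by_cases h2 : k = j <;>
      simp [h1, h2, hf, hg, integrable_const, (show j ≠ i from hij.symm)]

lemma pi_integral_pair {f g : ℝ → ℝ} {i j : Fin n} (hij : i ≠ j) :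
    ∫ v : Fin n → ℝ, f (v i) * g (v j) ∂(Measure.pi fun _ => ν)
      = (∫ y, f y ∂ν) * ∫ y, g y ∂ν := by
  classical
  have : (fun v : Fin n → ℝ => f (v i) * g (v j))
      = fun v => ∏ k, (fun k y => if k = i then f y else if k = j then g y else 1) k (v k) := by
    funext v
    rw [Fintype.prod_eq_mul i j hij (fun k hk => by simp [hk.1, hk.2])]
    simp [hij, (show j ≠ i from hij.symm)]
  rw [this, pi_integral_prod_real ν
    (fun k y => if k = i then f y else if k = j then g y else 1)]
  rw [Fintype.prod_eq_mul i j hij (fun k hk => by simp [hk.1, hk.2, integral_const])]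
  simp [hij, (show j ≠ i from hij.symm)]





lemma continuous_dot {n : ℕ} (x : Fin n → ℝ) : Continuous (fun v : Fin n → ℝ => dot v x) := by
  unfold dot
  exact continuous_finset_sum _ (fun j _ => (continuous_apply j).mul continuous_const)

lemma my_integral_ofReal {α : Type*} [MeasurableSpace α] {μ : Measure α} (f : α → ℝ) :
    ∫ x, ((f x : ℝ) : ℂ) ∂μ = ((∫ x, f x ∂μ : ℝ) : ℂ) := integral_ofReal

lemma my_ofReal_integrable {α : Type*} [MeasurableSpace α] {μ : Measure α} {f : α → ℝ}
    (hf : Integrable f μ) : Integrable (fun x => ((f x : ℝ) : ℂ)) μ := hf.ofReal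

variable {n : ℕ} {ν : Measure ℝ} [IsProbabilityMeasure ν]

lemma sin_integrable (u : ℝ) : Integrable (fun y => Real.sin (u * y)) ν :=
  integrable_of_bdd
    ((Real.continuous_sin.comp (continuous_const.mul continuous_id)).aestronglyMeasurable)
    1 (fun y => Real.abs_sin_le_one _)

lemma exp_I_mul_eq (a : ℝ) :
    Complex.exp (Complex.I * (a : ℂ))
      = ((Real.cos a : ℝ) : ℂ) + ((Real.sin a : ℝ) : ℂ) * Complex.I := by
  rw [mul_comm, Complex.exp_mul_I, ← Complex.ofReal_cos, ← Complex.ofReal_sin]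

lemma integral_exp_I_mul_eq {α : Type*} [MeasurableSpace α] {μ : Measure α}
    [IsProbabilityMeasure μ] {g : α → ℝ} (hgc : Integrable (fun a => Real.cos (g a)) μ)
    (hgs : Integrable (fun a => Real.sin (g a)) μ) :
    ∫ a, Complex.exp (Complex.I * ((g a : ℝ) : ℂ)) ∂μ
      = ((∫ a, Real.cos (g a) ∂μ : ℝ) : ℂ) + ((∫ a, Real.sin (g a) ∂μ : ℝ) : ℂ) * Complex.I := by
  have h1 : ∀ a, Complex.exp (Complex.I * ((g a : ℝ) : ℂ))
      = ((Real.cos (g a) : ℝ) : ℂ) + ((Real.sin (g a) : ℝ) : ℂ) * Complex.I :=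
    fun a => exp_I_mul_eq (g a)
  simp_rw [h1]
  rw [integral_add (my_ofReal_integrable hgc) ((my_ofReal_integrable hgs).mul_const Complex.I),
    integral_mul_const, my_integral_ofReal, my_integral_ofReal]

lemma integral_cos_dot (hsym : ν.map (fun t => -t) = ν) (x : Fin n → ℝ) (t : ℝ) :
    ∫ v, Real.cos (t * dot v x) ∂(Measure.pi fun _ : Fin n => ν)
      = ∏ i, ∫ y, Real.cos (t * x i * y) ∂ν := by
  have hsplit : ∀ v : Fin n → ℝ,
      Complex.exp (Complex.I * ((t * dot v x : ℝ) : ℂ))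
        = ∏ i, Complex.exp (Complex.I * ((t * x i * v i : ℝ) : ℂ)) := by
    intro v
    rw [← Complex.exp_sum]
    congr 1
    unfold dot
    push_cast
    rw [Finset.mul_sum, Finset.mul_sum]
    apply Finset.sum_congr rfl
    intro j _
    ring
  have hcont : Continuous (fun v : Fin n → ℝ => t * dot v x) :=
    continuous_const.mul (continuous_dot x)
  have hcosint : Integrable (fun v => Real.cos (t * dot v x)) (Measure.pi fun _ : Fin n => ν) :=
    integrable_of_bdd ((Real.continuous_cos.comp hcont).aestronglyMeasurable) 1
      (fun v => Real.abs_cos_le_one _)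
  have hsinint : Integrable (fun v => Real.sin (t * dot v x)) (Measure.pi fun _ : Fin n => ν) :=
    integrable_of_bdd ((Real.continuous_sin.comp hcont).aestronglyMeasurable) 1
      (fun v => Real.abs_sin_le_one _)
  have hB := integral_exp_I_mul_eq (μ := Measure.pi fun _ : Fin n => ν)
    (g := fun v => t * dot v x) hcosint hsinint
  have hA : ∫ v, Complex.exp (Complex.I * ((t * dot v x : ℝ) : ℂ)) ∂(Measure.pi fun _ : Fin n => ν)
      = ((∏ i, ∫ y, Real.cos (t * x i * y) ∂ν : ℝ) : ℂ) := by
    simp_rw [hsplit]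
    rw [pi_integral_prod ν (fun i y => Complex.exp (Complex.I * ((t * x i * y : ℝ) : ℂ)))]
    rw [Complex.ofReal_prod]
    apply Finset.prod_congr rfl
    intro i _
    have := integral_exp_I_mul_eq (μ := ν) (g := fun y => t * x i * y)
      (cos_integrable (t * x i)) (sin_integrable (t * x i))
    rw [this, integral_sin_zero hsym (t * x i)]
    simp
  rw [hA] at hB
  have h := congrArg Complex.re hB
  simp only [Complex.ofReal_re, Complex.add_re, Complex.mul_re, Complex.I_re, Complex.I_im,
    Complex.ofReal_im, mul_zero, zero_mul, mul_one, sub_zero, add_zero, zero_sub, neg_zero] at h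
  exact h.symm




variable {n : ℕ} {ν : Measure ℝ} [IsProbabilityMeasure ν]

lemma third_moment_ge_one (h2 : (∫ t, t ^ 2 ∂ν) = 1)
    (hI3 : Integrable (fun t => |t| ^ 3) ν) : 1 ≤ ∫ t, |t| ^ 3 ∂ν := by
  have h2i : Integrable (fun t : ℝ => t^2) ν := sq_integrable_of_eq_one h2
  have key : 0 ≤ ∫ t, (2 * |t|^3 - 3 * t^2 + 1) ∂ν := by
    apply integral_nonneg
    intro t
    show (0:ℝ) ≤ 2 * |t|^3 - 3 * t^2 + 1
    have h1 : 0 ≤ |t| := abs_nonneg t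
    have h2' : t^2 = |t|^2 := (sq_abs t).symm
    nlinarith [sq_nonneg (|t| - 1)]
  have hsub : Integrable (fun t : ℝ => 2 * |t|^3 - 3 * t^2) ν :=
    (hI3.const_mul 2).sub (h2i.const_mul 3)
  have e : ∫ t, (2 * |t|^3 - 3 * t^2 + 1) ∂ν
      = 2 * (∫ t, |t|^3 ∂ν) - 3 * (∫ t, t^2 ∂ν) + 1 := by
    rw [integral_add hsub (integrable_const 1),
      integral_sub (hI3.const_mul 2) (h2i.const_mul 3), integral_const_mul, integral_const_mul]
    simp
  rw [e, h2] at key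
  linarith

/-- Bound on the product of characteristic-function factors. -/
lemma Phi_le (h2 : (∫ t, t ^ 2 ∂ν) = 1) (hI3 : Integrable (fun t => |t| ^ 3) ν)
    (x : Fin n → ℝ) (hsq : ∑ i, (x i)^2 = 1)
    (hx3 : (∫ t, |t| ^ 3 ∂ν) * ∑ i, |x i|^3 ≤ 1/40)
    (hxi : ∀ i, (∫ t, |t| ^ 3 ∂ν) * |x i| ≤ 1/40)
    {t : ℝ} (ht0 : 0 ≤ t) (ht : t ≤ 12) :
    ∏ i, ∫ y, Real.cos (t * x i * y) ∂ν ≤ Real.exp (-(9/20) * t^2) := by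
  set m := ∫ t, |t| ^ 3 ∂ν with hm
  have hm1 : 1 ≤ m := third_moment_ge_one h2 hI3
  set c : Fin n → ℝ := fun i => ∫ y, Real.cos (t * x i * y) ∂ν with hc
  set b : Fin n → ℝ := fun i => 1 - (t * x i)^2/2 + |t * x i|^3 * m / 6 with hb
  have habs : ∀ i, |t * x i| ≤ 3/10 := by
    intro i
    rw [abs_mul, abs_of_nonneg ht0]
    have h1 : m * |x i| ≤ 1/40 := hxi i
    have h2' : |x i| ≤ 1/40 := by nlinarith [abs_nonneg (x i)]
    nlinarith [abs_nonneg (x i)]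
  have hcb : ∀ i, c i ≤ b i := fun i => (factor_bounds h2 hI3 (t * x i)).2
  have hc0 : ∀ i, 0 ≤ c i := by
    intro i
    have := (factor_bounds h2 hI3 (t * x i)).1
    have h1 := habs i
    nlinarith [sq_abs (t * x i), abs_nonneg (t * x i)]
  have hprod : ∏ i, c i ≤ ∏ i, b i :=
    Finset.prod_le_prod (fun i _ => hc0 i) (fun i _ => hcb i)
  have hb0 : ∀ i, 0 ≤ b i := fun i => le_trans (hc0 i) (hcb i)
  have hbe : ∏ i, b i ≤ ∏ i, Real.exp (b i - 1) :=
    Finset.prod_le_prod (fun i _ => hb0 i)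
      (fun i _ => by have := Real.add_one_le_exp (b i - 1); linarith)
  have hsum : ∑ i, (b i - 1) ≤ -(9/20) * t^2 := by
    have e0 : ∑ i, (b i - 1)
        = ∑ i, (-(t^2/2) * (x i)^2 + (t^3/6) * (m * |x i|^3)) := by
      apply Finset.sum_congr rfl
      intro i _
      rw [hb]
      simp only
      rw [abs_mul, abs_of_nonneg ht0, mul_pow, mul_pow]
      ring
    have e1 : ∑ i, (b i - 1) = -(t^2/2) * (∑ i, (x i)^2) + (t^3/6) * (m * ∑ i, |x i|^3) := by
      rw [e0, Finset.sum_add_distrib, ← Finset.mul_sum, ← Finset.mul_sum, ← Finset.mul_sum]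
    rw [e1, hsq]
    have h3 : 0 ≤ m * ∑ i, |x i|^3 := by
      apply mul_nonneg (by linarith)
      exact Finset.sum_nonneg (fun i _ => by positivity)
    nlinarith [sq_nonneg t, mul_le_mul_of_nonneg_left hx3 (show (0:ℝ) ≤ t^3/6 by positivity),
      mul_le_mul_of_nonneg_right (mul_self_le_mul_self ht0 ht) (le_of_lt (show (0:ℝ) < 1 by norm_num))]
  calc ∏ i, c i ≤ ∏ i, Real.exp (b i - 1) := le_trans hprod hbe
    _ = Real.exp (∑ i, (b i - 1)) := (Real.exp_sum _ _).symm
    _ ≤ Real.exp (-(9/20) * t^2) := Real.exp_le_exp.mpr hsum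




lemma exp_le_one_sub_add (y : ℝ) (hy : 0 ≤ y) : 1 - Real.exp (-y) ≤ y := by
  have := Real.add_one_le_exp (-y)
  linarith

lemma model_nonneg (t : ℝ) : 0 ≤ (1 - Real.exp (-(9/20) * t^2))/t^2 := by
  apply div_nonneg _ (sq_nonneg t)
  have : Real.exp (-(9/20) * t^2) ≤ 1 := by
    rw [← Real.exp_zero]
    apply Real.exp_le_exp.mpr
    nlinarith [sq_nonneg t]
  linarith

lemma model_le (t : ℝ) : (1 - Real.exp (-(9/20) * t^2))/t^2 ≤ 9/20 := by
  rcases eq_or_ne t 0 with rfl | ht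
  · norm_num
  · rw [div_le_iff₀ (by positivity)]
    have h1 : 1 - Real.exp (-(9/20 * t^2)) ≤ 9/20 * t^2 :=
      exp_le_one_sub_add _ (by positivity)
    calc 1 - Real.exp (-(9/20) * t^2) = 1 - Real.exp (-(9/20 * t^2)) := by ring_nf
      _ ≤ 9/20 * t^2 := h1
      _ = 9/20 * t^2 := by ring

lemma model_integrableOn {s : Set ℝ} (hs : volume s ≠ ⊤) :
    IntegrableOn (fun t => (1 - Real.exp (-(9/20) * t^2))/t^2) s := by
  apply Measure.integrableOn_of_bounded hs
  · exact ((measurable_const.sub ((Real.measurable_exp.comp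
      ((measurable_const.mul (measurable_id.pow_const 2)))))).div
      (measurable_id.pow_const 2)).aestronglyMeasurable
  · filter_upwards with t
    rw [Real.norm_eq_abs, abs_of_nonneg (model_nonneg t)]
    exact model_le t

lemma exp_neg_le {a r s : ℝ} (hs : 0 < s) (hsa : s ≤ Real.exp a) (hrs : s⁻¹ ≤ r) :
    Real.exp (-a) ≤ r := by
  rw [Real.exp_neg]
  exact le_trans (inv_anti₀ hs hsa) hrs

lemma expb1 : Real.exp (-(9/20 : ℝ)) ≤ 16/25 := by
  apply exp_neg_le (s := 25/16) (by norm_num)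
  · refine le_trans ?_ (Real.sum_le_exp_of_nonneg (by norm_num : (0:ℝ) ≤ 9/20) 4)
    norm_num [Finset.sum_range_succ, Nat.factorial]
  · norm_num

lemma expb2 : Real.exp (-(81/80 : ℝ)) ≤ 37/100 := by
  apply exp_neg_le (s := 100/37) (by norm_num)
  · refine le_trans ?_ (Real.sum_le_exp_of_nonneg (by norm_num : (0:ℝ) ≤ 81/80) 5)
    norm_num [Finset.sum_range_succ, Nat.factorial]
  · norm_num

lemma expb3 : Real.exp (-(9/5 : ℝ)) ≤ 17/100 := by
  apply exp_neg_le (s := 100/17) (by norm_num)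
  · refine le_trans ?_ (Real.sum_le_exp_of_nonneg (by norm_num : (0:ℝ) ≤ 9/5) 6)
    norm_num [Finset.sum_range_succ, Nat.factorial]
  · norm_num

lemma expb4 : Real.exp (-(45/16 : ℝ)) ≤ 7/100 := by
  apply exp_neg_le (s := 100/7) (by norm_num)
  · refine le_trans ?_ (Real.sum_le_exp_of_nonneg (by norm_num : (0:ℝ) ≤ 45/16) 7)
    norm_num [Finset.sum_range_succ, Nat.factorial]
  · norm_num

lemma expb5 : Real.exp (-(81/20 : ℝ)) ≤ 1/50 := by
  apply exp_neg_le (s := 50) (by norm_num)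
  · refine le_trans ?_ (Real.sum_le_exp_of_nonneg (by norm_num : (0:ℝ) ≤ 81/20) 8)
    norm_num [Finset.sum_range_succ, Nat.factorial]
  · norm_num

lemma piece_tail {a b E : ℝ} (ha : 0 < a) (hab : a ≤ b)
    (hE : Real.exp (-(9/20) * a^2) ≤ E) (hE1 : E ≤ 1) :
    (1 - E) * (a⁻¹ - b⁻¹) ≤ ∫ t in Set.Ioc a b, (1 - Real.exp (-(9/20) * t^2))/t^2 := by
  have hconst : IntegrableOn (fun t : ℝ => (1 - E) * (t^2)⁻¹) (Set.Ioc a b) := by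
    rw [← intervalIntegrable_iff_integrableOn_Ioc_of_le hab]
    apply ContinuousOn.intervalIntegrable
    apply continuousOn_const.mul
    apply ContinuousOn.inv₀ (by fun_prop)
    intro y hy
    rw [Set.uIcc_of_le hab] at hy
    exact pow_ne_zero 2 (ne_of_gt (lt_of_lt_of_le ha hy.1))
  calc (1 - E) * (a⁻¹ - b⁻¹) = ∫ t in Set.Ioc a b, (1 - E) * (t^2)⁻¹ := by
        rw [← intervalIntegral.integral_of_le hab, intervalIntegral.integral_const_mul,
          integral_inv_sq' ha hab]
    _ ≤ ∫ t in Set.Ioc a b, (1 - Real.exp (-(9/20) * t^2))/t^2 := by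
        apply setIntegral_mono_on hconst (model_integrableOn measure_Ioc_lt_top.ne)
          measurableSet_Ioc
        intro t ht
        rw [div_eq_mul_inv]
        apply mul_le_mul_of_nonneg_right _ (by positivity)
        have hmono : Real.exp (-(9/20) * t^2) ≤ Real.exp (-(9/20) * a^2) := by
          apply Real.exp_le_exp.mpr
          nlinarith [ht.1, ha.le, le_trans ha.le ht.1.le]
        have := le_trans hmono hE
        linarith

lemma piece_head :
    (333/800 : ℝ) ≤ ∫ t in Set.Ioc (0:ℝ) 1, (1 - Real.exp (-(9/20) * t^2))/t^2 := by
  have hpoly : IntegrableOn (fun t : ℝ => 9/20 - 81/800 * t^2) (Set.Ioc (0:ℝ) 1) := by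
    rw [← intervalIntegrable_iff_integrableOn_Ioc_of_le (by norm_num : (0:ℝ) ≤ 1)]
    exact (continuous_const.sub (continuous_const.mul (continuous_pow 2))).intervalIntegrable 0 1
  calc (333/800 : ℝ) = ∫ t in Set.Ioc (0:ℝ) 1, (9/20 - 81/800 * t^2) := by
        rw [← intervalIntegral.integral_of_le (by norm_num : (0:ℝ) ≤ 1)]
        rw [intervalIntegral.integral_sub (g := fun t : ℝ => (81/800:ℝ) * t^2) intervalIntegrable_const
          (((continuous_const.mul (continuous_pow 2))).intervalIntegrable 0 1),
          intervalIntegral.integral_const, intervalIntegral.integral_const_mul, integral_pow]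
        norm_num
    _ ≤ _ := by
        apply setIntegral_mono_on hpoly (model_integrableOn measure_Ioc_lt_top.ne)
          measurableSet_Ioc
        intro t ht
        rw [le_div_iff₀ (pow_pos ht.1 2)]
        have hexp := exp_neg_upper (y := 9/20 * t^2) (by positivity)
        have e : -(9/20) * t^2 = -(9/20 * t^2) := by ring
        rw [e]
        nlinarith [ht.1, ht.2, sq_nonneg t, sq_nonneg (t^2)]

lemma model_total :
    (1 : ℝ) ≤ ∫ t in Set.Ioc (0:ℝ) 12, (1 - Real.exp (-(9/20) * t^2))/t^2 := by
  have hint : ∀ a b : ℝ, IntegrableOn (fun t => (1 - Real.exp (-(9/20) * t^2))/t^2)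
      (Set.Ioc a b) := fun a b => model_integrableOn measure_Ioc_lt_top.ne
  have hsplit : ∀ a b c : ℝ, a ≤ b → b ≤ c →
      (∫ t in Set.Ioc a c, (1 - Real.exp (-(9/20) * t^2))/t^2)
        = (∫ t in Set.Ioc a b, (1 - Real.exp (-(9/20) * t^2))/t^2)
          + ∫ t in Set.Ioc b c, (1 - Real.exp (-(9/20) * t^2))/t^2 := by
    intro a b c hab hbc
    rw [← Set.Ioc_union_Ioc_eq_Ioc hab hbc,
      setIntegral_union (Set.Ioc_disjoint_Ioc_of_le le_rfl) measurableSet_Ioc (hint a b) (hint b c)]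
  rw [hsplit 0 1 12 (by norm_num) (by norm_num),
    hsplit 1 (3/2) 12 (by norm_num) (by norm_num),
    hsplit (3/2) 2 12 (by norm_num) (by norm_num),
    hsplit 2 (5/2) 12 (by norm_num) (by norm_num),
    hsplit (5/2) 3 12 (by norm_num) (by norm_num),
    hsplit 3 4 12 (by norm_num) (by norm_num)]
  have h1 := piece_head
  have h2 := piece_tail (a := 1) (b := 3/2) (E := 16/25) (by norm_num) (by norm_num)
    (by have h : (-(9/20) * (1:ℝ)^2) = -(9/20 : ℝ) := by norm_num
        rw [h]; exact expb1) (by norm_num)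
  have h3 := piece_tail (a := 3/2) (b := 2) (E := 37/100) (by norm_num) (by norm_num)
    (by have h : (-(9/20) * ((3/2):ℝ)^2) = -(81/80 : ℝ) := by norm_num
        rw [h]; exact expb2) (by norm_num)
  have h4 := piece_tail (a := 2) (b := 5/2) (E := 17/100) (by norm_num) (by norm_num)
    (by have h : (-(9/20) * ((2):ℝ)^2) = -(9/5 : ℝ) := by norm_num
        rw [h]; exact expb3) (by norm_num)
  have h5 := piece_tail (a := 5/2) (b := 3) (E := 7/100) (by norm_num) (by norm_num)
    (by have h : (-(9/20) * ((5/2):ℝ)^2) = -(45/16 : ℝ) := by norm_num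
        rw [h]; exact expb4) (by norm_num)
  have h6 := piece_tail (a := 3) (b := 4) (E := 1/50) (by norm_num) (by norm_num)
    (by have h : (-(9/20) * ((3):ℝ)^2) = -(81/20 : ℝ) := by norm_num
        rw [h]; exact expb5) (by norm_num)
  have h7 := piece_tail (a := 4) (b := 12) (E := 1/50) (by norm_num) (by norm_num)
    (by
      refine le_trans (Real.exp_le_exp.mpr ?_) expb5
      norm_num) (by norm_num)
  norm_num at h1 h2 h3 h4 h5 h6 h7 ⊢
  linarith




variable {n : ℕ} {ν : Measure ℝ} [IsProbabilityMeasure ν]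

lemma dot_integrable (h2i : Integrable (fun t : ℝ => t^2) ν) (w : Fin n → ℝ) :
    Integrable (fun v : Fin n → ℝ => dot v w) (Measure.pi fun _ : Fin n => ν) := by
  unfold dot
  apply integrable_finset_sum
  intro j _
  exact (pi_integrable_single ν (id_integrable_of_sq h2i) j).mul_const (w j)

lemma dot_sq_integrable (h2i : Integrable (fun t : ℝ => t^2) ν) (w : Fin n → ℝ) :
    Integrable (fun v : Fin n → ℝ => (dot v w)^2) (Measure.pi fun _ : Fin n => ν) := by
  have h1i : Integrable (fun t : ℝ => t) ν := id_integrable_of_sq h2i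
  have e : (fun v : Fin n → ℝ => (dot v w)^2)
      = fun v => ∑ i, ∑ j, (w i * w j) * (v i * v j) := by
    funext v
    rw [pow_two]
    unfold dot
    rw [Finset.sum_mul_sum]
    apply Finset.sum_congr rfl
    intro i _
    apply Finset.sum_congr rfl
    intro j _
    ring
  rw [e]
  apply integrable_finset_sum
  intro i _
  apply integrable_finset_sum
  intro j _
  by_cases h : i = j
  · subst h
    have := (pi_integrable_single ν h2i i).const_mul (w i * w i)
    apply this.congr
    filter_upwards with v
    rw [pow_two]
  · exact (pi_integrable_pair ν h1i h1i h).const_mul _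

lemma dot_sq_integral (hsym : ν.map (fun t => -t) = ν) (h2 : (∫ t, t ^ 2 ∂ν) = 1)
    (w : Fin n → ℝ) :
    ∫ v, (dot v w)^2 ∂(Measure.pi fun _ : Fin n => ν) = ∑ i, (w i)^2 := by
  have h2i : Integrable (fun t : ℝ => t^2) ν := sq_integrable_of_eq_one h2
  have h1i : Integrable (fun t : ℝ => t) ν := id_integrable_of_sq h2i
  have hterm : ∀ i j : Fin n,
      (∫ v, (w i * w j) * (v i * v j) ∂(Measure.pi fun _ : Fin n => ν))
        = if i = j then (w i)^2 else 0 := by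
    intro i j
    by_cases h : i = j
    · subst h
      rw [if_pos rfl, integral_const_mul]
      have h1 := pi_integral_single (ν := ν) (f := fun t : ℝ => t * t) i
      rw [h1]
      have h2' : ∫ y, y * y ∂ν = 1 := by
        rw [← h2]
        apply integral_congr_ae
        filter_upwards with y
        rw [pow_two]
      rw [h2']
      rw [pow_two]
      ring
    · rw [if_neg h, integral_const_mul]
      have h1 := pi_integral_pair (ν := ν) (f := fun t : ℝ => t) (g := fun t : ℝ => t) h
      rw [h1, integral_id_zero hsym]
      ring
  have e : ∀ v : Fin n → ℝ, (dot v w)^2 = ∑ i, ∑ j, (w i * w j) * (v i * v j) := by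
    intro v
    rw [pow_two]
    unfold dot
    rw [Finset.sum_mul_sum]
    apply Finset.sum_congr rfl
    intro i _
    apply Finset.sum_congr rfl
    intro j _
    ring
  have hti : ∀ i j : Fin n, Integrable (fun v : Fin n → ℝ => (w i * w j) * (v i * v j))
      (Measure.pi fun _ : Fin n => ν) := by
    intro i j
    by_cases h : i = j
    · subst h
      have := (pi_integrable_single ν h2i i).const_mul (w i * w i)
      apply this.congr
      filter_upwards with v
      rw [pow_two]
    · exact (pi_integrable_pair ν h1i h1i h).const_mul _
  calc ∫ v, (dot v w)^2 ∂(Measure.pi fun _ : Fin n => ν)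
      = ∫ v, ∑ i, ∑ j, (w i * w j) * (v i * v j) ∂(Measure.pi fun _ : Fin n => ν) := by
        apply integral_congr_ae
        filter_upwards with v
        exact e v
    _ = ∑ i, ∫ v, ∑ j, (w i * w j) * (v i * v j) ∂(Measure.pi fun _ : Fin n => ν) := by
        apply integral_finset_sum
        intro i _
        exact integrable_finset_sum _ (fun j _ => hti i j)
    _ = ∑ i, ∑ j, ∫ v, (w i * w j) * (v i * v j) ∂(Measure.pi fun _ : Fin n => ν) := by
        apply Finset.sum_congr rfl
        intro i _
        exact integral_finset_sum _ (fun j _ => hti i j)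
    _ = ∑ i : Fin n, ∑ j : Fin n, (if i = j then (w i)^2 else 0) := by
        apply Finset.sum_congr rfl
        intro i _
        exact Finset.sum_congr rfl (fun j _ => hterm i j)
    _ = ∑ i, (w i)^2 := by
        apply Finset.sum_congr rfl
        intro i _
        simp

lemma integral_abs_le_sqrt {α : Type*} [MeasurableSpace α] {μ : Measure α}
    [IsProbabilityMeasure μ] {f : α → ℝ} (hf : Integrable f μ)
    (hf2 : Integrable (fun a => (f a)^2) μ) :
    ∫ a, |f a| ∂μ ≤ Real.sqrt (∫ a, (f a)^2 ∂μ) := by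
  set A := ∫ a, |f a| ∂μ with hA
  have hA0 : 0 ≤ A := integral_nonneg (fun a => abs_nonneg _)
  have hsq0 : 0 ≤ ∫ a, (f a)^2 ∂μ := integral_nonneg (fun a => sq_nonneg _)
  rw [Real.le_sqrt hA0 hsq0]
  have h0 : 0 ≤ ∫ a, (|f a| - A)^2 ∂μ := integral_nonneg (fun a => sq_nonneg _)
  have ept : (fun a => (|f a| - A)^2) = fun a => ((f a)^2 - (2*A) * |f a|) + A^2 := by
    funext a
    have h := sq_abs (f a)
    linear_combination h
  have hsub : Integrable (fun a => (f a)^2 - (2*A) * |f a|) μ :=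
    hf2.sub (hf.abs.const_mul (2*A))
  have e : ∫ a, (|f a| - A)^2 ∂μ = (∫ a, (f a)^2 ∂μ) - A^2 := by
    rw [ept, integral_add hsub (integrable_const _),
      integral_sub hf2 (hf.abs.const_mul (2*A)), integral_const_mul]
    simp only [integral_const, measure_univ, probReal_univ, ENNReal.toReal_one, smul_eq_mul, one_mul]
    rw [← hA]
    ring
  rw [e] at h0
  linarith




variable {n : ℕ} {ν : Measure ℝ} [IsProbabilityMeasure ν]

lemma lower_main (hsym : ν.map (fun t => -t) = ν) (h2 : (∫ t, t ^ 2 ∂ν) = 1)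
    (hI3 : Integrable (fun t => |t| ^ 3) ν) (x : Fin n → ℝ) (hsq : ∑ i, (x i)^2 = 1)
    (hx3 : (∫ t, |t| ^ 3 ∂ν) * ∑ i, |x i|^3 ≤ 1/40)
    (hxi : ∀ i, (∫ t, |t| ^ 3 ∂ν) * |x i| ≤ 1/40) :
    1/2 ≤ ∫ v, |dot v x| ∂(Measure.pi fun _ : Fin n => ν) := by
  set μ := (Measure.pi fun _ : Fin n => ν) with hμdef
  have h2i : Integrable (fun t : ℝ => t^2) ν := sq_integrable_of_eq_one h2
  have hSint : Integrable (fun v => dot v x) μ := dot_integrable h2i x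
  have hS2int : Integrable (fun v => (dot v x)^2) μ := dot_sq_integrable h2i x
  haveI hfin : IsFiniteMeasure (volume.restrict (Set.Ioc (0:ℝ) 12)) :=
    ⟨by rw [Measure.restrict_apply_univ]; exact measure_Ioc_lt_top⟩
  set G : (Fin n → ℝ) × ℝ → ℝ := fun p => (1 - Real.cos (p.2 * dot p.1 x)) / p.2^2 with hGdef
  have hGmeas : AEStronglyMeasurable G (μ.prod (volume.restrict (Set.Ioc (0:ℝ) 12))) := by
    apply Measurable.aestronglyMeasurable
    exact (measurable_const.sub (Real.measurable_cos.comp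
      (measurable_snd.mul ((continuous_dot x).measurable.comp measurable_fst)))).div
      (measurable_snd.pow_const 2)
  have hGbd : ∀ p : (Fin n → ℝ) × ℝ, |G p| ≤ (dot p.1 x)^2 / 2 := by
    intro p
    rcases eq_or_ne p.2 0 with h | h
    · rw [hGdef]
      simp only [h]
      norm_num
      positivity
    · have h1 : 0 ≤ G p := by
        rw [hGdef]
        exact div_nonneg (by nlinarith [Real.cos_le_one (p.2 * dot p.1 x)]) (sq_nonneg _)
      rw [abs_of_nonneg h1, hGdef]
      simp only
      rw [div_le_iff₀ (by positivity)]
      have := Real.one_sub_sq_div_two_le_cos (x := p.2 * dot p.1 x)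
      nlinarith [sq_nonneg (p.2 * dot p.1 x)]
  have hGdom : Integrable (fun p : (Fin n → ℝ) × ℝ => (dot p.1 x)^2/2)
      (μ.prod (volume.restrict (Set.Ioc (0:ℝ) 12))) := by
    have := Integrable.mul_prod (L := ℝ) (ν := volume.restrict (Set.Ioc (0:ℝ) 12))
      (hS2int.div_const 2) (integrable_const (1:ℝ))
    simpa using this
  have hGint : Integrable G (μ.prod (volume.restrict (Set.Ioc (0:ℝ) 12))) := by
    apply hGdom.mono' hGmeas
    filter_upwards with p
    rw [Real.norm_eq_abs]
    exact hGbd p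
  have hcos_int : ∀ t : ℝ, Integrable (fun v => Real.cos (t * dot v x)) μ := fun t =>
    integrable_of_bdd ((Real.continuous_cos.comp
      (continuous_const.mul (continuous_dot x))).aestronglyMeasurable) 1
      (fun v => Real.abs_cos_le_one _)
  have hD : ∀ t : ℝ, ∫ v, G (v, t) ∂μ
      = (1 - ∏ i, ∫ y, Real.cos (t * x i * y) ∂ν) / t^2 := by
    intro t
    rw [hGdef]
    simp only
    rw [integral_div, integral_sub (integrable_const 1) (hcos_int t), integral_const]
    simp only [measure_univ, probReal_univ, ENNReal.toReal_one, smul_eq_mul, one_mul]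
    rw [integral_cos_dot hsym x t]
  have hswap := integral_integral_swap (μ := μ) (ν := volume.restrict (Set.Ioc (0:ℝ) 12))
    (f := fun v t => G (v, t)) hGint
  have hFv_int : Integrable (fun v => ∫ t, G (v, t) ∂(volume.restrict (Set.Ioc (0:ℝ) 12))) μ :=
    hGint.integral_prod_left
  have hA : ∫ v, (1/2) * (∫ t, G (v, t) ∂(volume.restrict (Set.Ioc (0:ℝ) 12))) ∂μ
      ≤ ∫ v, |dot v x| ∂μ := by
    apply integral_mono (hFv_int.const_mul _) hSint.abs
    intro v
    have hp := pointwise_abs_lower (dot v x) (show (0:ℝ) < 12 by norm_num)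
    rw [intervalIntegral.integral_of_le (by norm_num : (0:ℝ) ≤ 12)] at hp
    exact hp
  have hPhi_int : IntegrableOn (fun t => (1 - ∏ i, ∫ y, Real.cos (t * x i * y) ∂ν) / t^2)
      (Set.Ioc (0:ℝ) 12) volume := by
    have h1 : Integrable (fun t => ∫ v, G (v, t) ∂μ) (volume.restrict (Set.Ioc (0:ℝ) 12)) :=
      hGint.integral_prod_right
    exact h1.congr (ae_of_all _ hD)
  have hmodel : ∫ t in Set.Ioc (0:ℝ) 12, (1 - Real.exp (-(9/20) * t^2))/t^2
      ≤ ∫ t in Set.Ioc (0:ℝ) 12, (1 - ∏ i, ∫ y, Real.cos (t * x i * y) ∂ν) / t^2 := by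
    apply setIntegral_mono_on (model_integrableOn measure_Ioc_lt_top.ne) hPhi_int
      measurableSet_Ioc
    intro t ht
    have hPhi := Phi_le h2 hI3 x hsq hx3 hxi ht.1.le ht.2
    have ht2 : (0:ℝ) < t^2 := pow_pos ht.1 2
    exact (div_le_div_iff_of_pos_right ht2).mpr (by linarith [hPhi])
  calc (1:ℝ)/2 = (1/2) * 1 := by ring
    _ ≤ (1/2) * ∫ t in Set.Ioc (0:ℝ) 12, (1 - Real.exp (-(9/20) * t^2))/t^2 :=
        mul_le_mul_of_nonneg_left model_total (by norm_num)
    _ ≤ (1/2) * ∫ t in Set.Ioc (0:ℝ) 12,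
          (1 - ∏ i, ∫ y, Real.cos (t * x i * y) ∂ν) / t^2 :=
        mul_le_mul_of_nonneg_left hmodel (by norm_num)
    _ = (1/2) * ∫ t in Set.Ioc (0:ℝ) 12, ∫ v, G (v, t) ∂μ := by
        congr 1
        apply integral_congr_ae
        exact ae_of_all _ (fun t => (hD t).symm)
    _ = (1/2) * ∫ v, (∫ t, G (v, t) ∂(volume.restrict (Set.Ioc (0:ℝ) 12))) ∂μ := by
        rw [← hswap]
    _ = ∫ v, (1/2) * (∫ t, G (v, t) ∂(volume.restrict (Set.Ioc (0:ℝ) 12))) ∂μ :=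
        (integral_const_mul _ _).symm
    _ ≤ ∫ v, |dot v x| ∂μ := hA
end AuxLemmas

/-- **Lemma 4.4.**  There is an absolute constant `c > 0` such that the following holds.  Let
the random vector `a ∈ ℝⁿ` have i.i.d. coordinates distributed as a symmetric, unit-variance
random variable of law `ν` with `E|a|³ < ∞`, let `x ∈ Sⁿ⁻¹`, and set `v_x = E[sign(⟨a,x⟩) a]`.
If `‖x‖_∞ ≤ c / E|a|³` then `1/2 ≤ ‖v_x‖₂ ≤ 1`. -/
theorem sign_expectation_vector_norm_bounds :
    ∃ c : ℝ, 0 < c ∧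
      ∀ (n : ℕ) (ν : Measure ℝ) [IsProbabilityMeasure ν],
        ν.map (fun t => -t) = ν →
        (∫ t, t ^ 2 ∂ν) = 1 →
        Integrable (fun t => |t| ^ 3) ν →
        ∀ (x : Fin n → ℝ), sq2 x = 1 →
        linf x ≤ c / (∫ t, |t| ^ 3 ∂ν) →
        1 / 2 ≤
            Real.sqrt (sq2 fun j =>
              ∫ v, psign (dot v x) * v j ∂(Measure.pi fun _ : Fin n => ν)) ∧
          Real.sqrt (sq2 fun j =>
              ∫ v, psign (dot v x) * v j ∂(Measure.pi fun _ : Fin n => ν)) ≤ 1 := by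
  classical
  refine ⟨1/40, by norm_num, ?_⟩
  intro n ν _ hsym h2 hI3 x hsq hlinf
  have hsq' : ∑ i, (x i)^2 = 1 := by simpa [sq2] using hsq
  set μ := (Measure.pi fun _ : Fin n => ν) with hμdef
  set m := ∫ t, |t|^3 ∂ν with hm
  have hm1 : 1 ≤ m := third_moment_ge_one h2 hI3
  have hm0 : 0 < m := by linarith
  have hxle : ∀ i, |x i| ≤ (1/40)/m := by
    intro i
    refine le_trans ?_ hlinf
    have hbdd : BddAbove (Set.range fun j : Fin n => |x j|) := Set.Finite.bddAbove
      (Set.finite_range _)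
    exact le_ciSup hbdd i
  have hxi : ∀ i, m * |x i| ≤ 1/40 := by
    intro i
    have h := hxle i
    rw [le_div_iff₀ hm0] at h
    linarith [h]
  have hx3 : m * ∑ i, |x i|^3 ≤ 1/40 := by
    have hterm : ∀ i, |x i|^3 ≤ ((1/40)/m) * (x i)^2 := by
      intro i
      have h1 := hxle i
      have h2' : |x i|^3 = |x i| * (x i)^2 := by rw [← sq_abs]; ring
      rw [h2']
      exact mul_le_mul_of_nonneg_right h1 (sq_nonneg _)
    have hsum : ∑ i, |x i|^3 ≤ (1/40)/m := by
      calc ∑ i, |x i|^3 ≤ ∑ i, ((1/40)/m) * (x i)^2 :=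
            Finset.sum_le_sum (fun i _ => hterm i)
        _ = ((1/40)/m) * ∑ i, (x i)^2 := by rw [← Finset.mul_sum]
        _ = (1/40)/m := by rw [hsq']; ring
    calc m * ∑ i, |x i|^3 ≤ m * ((1/40)/m) :=
          mul_le_mul_of_nonneg_left hsum (le_of_lt hm0)
      _ = 1/40 := by field_simp
  have h2i := sq_integrable_of_eq_one h2
  have habs : Integrable (fun t : ℝ => |t|) ν := abs_integrable_of_sq h2i
  set w : Fin n → ℝ := fun j => ∫ v, psign (dot v x) * v j ∂μ with hw
  have hwj_int : ∀ j, Integrable (fun v => psign (dot v x) * v j) μ := by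
    intro j
    apply Integrable.mono' (pi_integrable_single ν habs j)
    · exact ((measurable_psign.comp (continuous_dot x).measurable).mul
        (measurable_pi_apply j)).aestronglyMeasurable
    · filter_upwards with v
      rw [Real.norm_eq_abs, abs_mul, abs_psign, one_mul]
  have hkey : ∀ u : Fin n → ℝ, (∑ j, w j * u j) = ∫ v, psign (dot v x) * dot v u ∂μ := by
    intro u
    have e1 : ∀ j : Fin n, w j * u j = ∫ v, (psign (dot v x) * v j) * u j ∂μ := by
      intro j
      exact (integral_mul_const (u j) (fun v => psign (dot v x) * v j)).symm
    calc ∑ j, w j * u j = ∑ j, ∫ v, (psign (dot v x) * v j) * u j ∂μ :=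
          Finset.sum_congr rfl (fun j _ => e1 j)
      _ = ∫ v, ∑ j, (psign (dot v x) * v j) * u j ∂μ :=
          (integral_finset_sum _ (fun j _ => (hwj_int j).mul_const _)).symm
      _ = ∫ v, psign (dot v x) * dot v u ∂μ := by
          apply integral_congr_ae
          filter_upwards with v
          unfold dot
          rw [Finset.mul_sum]
          apply Finset.sum_congr rfl
          intro j _
          ring
  have hlow : 1/2 ≤ ∑ j, w j * x j := by
    rw [hkey x]
    have e2 : ∫ v, psign (dot v x) * dot v x ∂μ = ∫ v, |dot v x| ∂μ := by
      apply integral_congr_ae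
      filter_upwards with v
      exact psign_mul_self _
    rw [e2]
    exact lower_main hsym h2 hI3 x hsq' hx3 hxi
  have hsq2w_nonneg : 0 ≤ sq2 w := Finset.sum_nonneg (fun j _ => sq_nonneg _)
  have hCS : ∑ j, w j * x j ≤ Real.sqrt (sq2 w) := by
    have h1 := Finset.sum_mul_sq_le_sq_mul_sq Finset.univ w x
    have h2' : (∑ j, w j * x j)^2 ≤ sq2 w := by
      calc (∑ j, w j * x j)^2 ≤ (∑ j, (w j)^2) * ∑ j, (x j)^2 := h1
        _ = sq2 w := by rw [hsq']; unfold sq2; ring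
    calc ∑ j, w j * x j ≤ |∑ j, w j * x j| := le_abs_self _
      _ = Real.sqrt ((∑ j, w j * x j)^2) := (Real.sqrt_sq_eq_abs _).symm
      _ ≤ Real.sqrt (sq2 w) := Real.sqrt_le_sqrt h2'
  constructor
  · exact le_trans hlow hCS
  · have hupper : sq2 w ≤ Real.sqrt (sq2 w) := by
      have e : sq2 w = ∑ j, w j * w j := by
        unfold sq2
        apply Finset.sum_congr rfl
        intro j _
        ring
      conv_lhs => rw [e, hkey w]
      have hint1 : Integrable (fun v => psign (dot v x) * dot v w) μ := by
        apply Integrable.mono' (dot_integrable h2i w).abs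
        · exact ((measurable_psign.comp (continuous_dot x).measurable).mul
            ((continuous_dot w).measurable)).aestronglyMeasurable
        · filter_upwards with v
          rw [Real.norm_eq_abs, abs_mul, abs_psign, one_mul]
      calc ∫ v, psign (dot v x) * dot v w ∂μ ≤ ∫ v, |dot v w| ∂μ := by
            apply integral_mono hint1 (dot_integrable h2i w).abs
            intro v
            calc psign (dot v x) * dot v w ≤ |psign (dot v x) * dot v w| := le_abs_self _
              _ = |dot v w| := by rw [abs_mul, abs_psign, one_mul]
        _ ≤ Real.sqrt (∫ v, (dot v w)^2 ∂μ) :=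
            integral_abs_le_sqrt (dot_integrable h2i w) (dot_sq_integrable h2i w)
        _ = Real.sqrt (sq2 w) := by
            rw [dot_sq_integral hsym h2 w]
            rfl
    nlinarith [Real.sq_sqrt hsq2w_nonneg, Real.sqrt_nonneg (sq2 w), hupper]


end
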